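/- With C = ln(1+√2)/π, one has (3C+4)/C < 17.26; consequently the minimum value H* of the Ising Hamiltonian on the Chimera graph G_r satisfies H* ≤ −(1/17.26)·(Σ_{(u,v)∈E}|c_{uv}| + Σ_{u∈V}|d_u|), i.e., the trivial lower bound −(Σ_{(u,v)∈E}|c_{uv}| + Σ_{u∈V}|d_u|) is within a factor less than 17.26 of the optimum. -/

import Mathlib

open Finset

abbrev ChimeraVertex (r : ℕ) := Fin r × Fin r × Fin 4 × Fin 2

def lowRow {r : ℕ} (i : Fin (r - 1)) : Fin r := ⟨i.val, by have := i.isLt; omega⟩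

def highRow {r : ℕ} (i : Fin (r - 1)) : Fin r := ⟨i.val + 1, by have := i.isLt; omega⟩

/-- `S` is a valid spin assignment, i.e. takes values in `{-1, 1}`. -/
def IsPM {r : ℕ} (S : ChimeraVertex r → ℝ) : Prop := ∀ v, S v = 1 ∨ S v = -1

/-- The Ising Hamiltonian on the Chimera graph `G_r`. -/
def IsingH {r : ℕ} (c0 : Fin (r - 1) → Fin r → Fin 4 → ℝ)
    (c1 : Fin r → Fin (r - 1) → Fin 4 → ℝ)
    (c01 : Fin r → Fin r → Fin 4 → Fin 4 → ℝ)
    (d : ChimeraVertex r → ℝ) (S : ChimeraVertex r → ℝ) : ℝ :=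
  (∑ i, ∑ j, ∑ k, c0 i j k * (S (lowRow i, j, k, 0) * S (highRow i, j, k, 0)))
    + (∑ i, ∑ j, ∑ k, c1 i j k * (S (i, lowRow j, k, 1) * S (i, highRow j, k, 1)))
    + (∑ i, ∑ j, ∑ k0, ∑ k1, c01 i j k0 k1 * (S (i, j, k0, 0) * S (i, j, k1, 1)))
    + (∑ v, d v * S v)

/-! ### Auxiliary machinery -/

noncomputable def chi (b : Bool) : ℝ := if b then -1 else 1

lemma chi_pm (b : Bool) : chi b = 1 ∨ chi b = -1 := by cases b <;> simp [chi]

lemma chi_not (b : Bool) : chi (!b) = - chi b := by cases b <;> simp [chi]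

section ProbSpace
variable {α : Type*} [Fintype α] [DecidableEq α]

lemma sum_chi (x : α) : ∑ g : α → Bool, chi (g x) = 0 := by
  apply Finset.sum_ninvolution (fun g => Function.update g x (!g x))
  · intro g; simp [Function.update_self, chi_not]
  · intro g _ h
    have := congrFun h x
    simp at this
  · intro g; exact Finset.mem_univ _
  · intro g; funext y
    by_cases hy : y = x
    · subst hy; simp
    · simp [Function.update_of_ne hy]

lemma sum_chi_mul (x y : α) :
    ∑ g : α → Bool, chi (g x) * chi (g y)
      = if x = y then (Fintype.card (α → Bool) : ℝ) else 0 := by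
  by_cases h : x = y
  · subst h
    simp only [if_pos rfl]
    have : ∀ g : α → Bool, chi (g x) * chi (g x) = 1 := by
      intro g; rcases chi_pm (g x) with h | h <;> rw [h] <;> norm_num
    rw [Finset.sum_congr rfl fun g _ => this g, Finset.sum_const, Finset.card_univ,
      nsmul_eq_mul, mul_one]
    simp
  · rw [if_neg h]
    apply Finset.sum_ninvolution (fun g => Function.update g x (!g x))
    · intro g
      rw [Function.update_self, Function.update_of_ne (show y ≠ x from fun hc => h hc.symm),
        chi_not]
      ring
    · intro g _ hne
      have := congrFun hne x
      simp at this
    · intro g; exact Finset.mem_univ _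
    · intro g; funext z
      by_cases hz : z = x
      · subst hz; simp
      · simp [Function.update_of_ne hz]

lemma pair_term (σ : α → α) (ε : α → ℝ) (a : ℝ) (u v : α) :
    ∑ g : α → Bool, a * ((ε u * chi (g (σ u))) * (ε v * chi (g (σ v))))
      = (Fintype.card (α → Bool) : ℝ) * (if σ u = σ v then a * (ε u * ε v) else 0) := by
  have h : ∀ g : α → Bool, a * ((ε u * chi (g (σ u))) * (ε v * chi (g (σ v))))
      = (a * (ε u * ε v)) * (chi (g (σ u)) * chi (g (σ v))) := fun g => by ring
  rw [Finset.sum_congr rfl fun g _ => h g, ← Finset.mul_sum, sum_chi_mul]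
  split <;> ring

lemma field_term (σ : α → α) (ε : α → ℝ) (a : ℝ) (u : α) :
    ∑ g : α → Bool, a * (ε u * chi (g (σ u))) = 0 := by
  have h : ∀ g : α → Bool, a * (ε u * chi (g (σ u)))
      = (a * ε u) * chi (g (σ u)) := fun g => by ring
  rw [Finset.sum_congr rfl fun g _ => h g, ← Finset.mul_sum, sum_chi, mul_zero]

end ProbSpace

lemma swap3 {γ α₁ α₂ α₃ : Type*} [Fintype γ] [Fintype α₁] [Fintype α₂] [Fintype α₃]
    (F : γ → α₁ → α₂ → α₃ → ℝ) :
    ∑ g : γ, ∑ i : α₁, ∑ j : α₂, ∑ k : α₃, F g i j k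
      = ∑ i : α₁, ∑ j : α₂, ∑ k : α₃, ∑ g : γ, F g i j k := by
  rw [Finset.sum_comm]
  refine Finset.sum_congr rfl fun i _ => ?_
  rw [Finset.sum_comm]
  refine Finset.sum_congr rfl fun j _ => ?_
  rw [Finset.sum_comm]

lemma swap4 {γ α₁ α₂ α₃ α₄ : Type*} [Fintype γ] [Fintype α₁] [Fintype α₂] [Fintype α₃] [Fintype α₄]
    (F : γ → α₁ → α₂ → α₃ → α₄ → ℝ) :
    ∑ g : γ, ∑ i : α₁, ∑ j : α₂, ∑ k : α₃, ∑ l : α₄, F g i j k l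
      = ∑ i : α₁, ∑ j : α₂, ∑ k : α₃, ∑ l : α₄, ∑ g : γ, F g i j k l := by
  rw [Finset.sum_comm]
  refine Finset.sum_congr rfl fun i _ => ?_
  exact swap3 (F · i)

lemma sum3_add {A B C : Type*} [Fintype A] [Fintype B] [Fintype C] (f g : A → B → C → ℝ) :
    (∑ i, ∑ j, ∑ k, f i j k) + (∑ i, ∑ j, ∑ k, g i j k)
      = ∑ i, ∑ j, ∑ k, (f i j k + g i j k) := by
  rw [← Finset.sum_add_distrib]
  refine Finset.sum_congr rfl fun i _ => ?_
  rw [← Finset.sum_add_distrib]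
  exact Finset.sum_congr rfl fun j _ => (Finset.sum_add_distrib).symm

lemma sum4_add {A B C D : Type*} [Fintype A] [Fintype B] [Fintype C] [Fintype D]
    (f g : A → B → C → D → ℝ) :
    (∑ i, ∑ j, ∑ k, ∑ l, f i j k l) + (∑ i, ∑ j, ∑ k, ∑ l, g i j k l)
      = ∑ i, ∑ j, ∑ k, ∑ l, (f i j k l + g i j k l) := by
  rw [← Finset.sum_add_distrib]
  exact Finset.sum_congr rfl fun i _ => sum3_add _ _

lemma sum3_neg {A B C : Type*} [Fintype A] [Fintype B] [Fintype C] (f : A → B → C → ℝ) :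
    (∑ i, ∑ j, ∑ k, (-(f i j k))) = -(∑ i, ∑ j, ∑ k, f i j k) := by
  simp [Finset.sum_neg_distrib]

lemma sum4_neg {A B C D : Type*} [Fintype A] [Fintype B] [Fintype C] [Fintype D]
    (f : A → B → C → D → ℝ) :
    (∑ i, ∑ j, ∑ k, ∑ l, (-(f i j k l))) = -(∑ i, ∑ j, ∑ k, ∑ l, f i j k l) := by
  simp [Finset.sum_neg_distrib]

/-- The key averaging lemma. -/
lemma key {r : ℕ} (c0 : Fin (r - 1) → Fin r → Fin 4 → ℝ)
    (c1 : Fin r → Fin (r - 1) → Fin 4 → ℝ)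
    (c01 : Fin r → Fin r → Fin 4 → Fin 4 → ℝ)
    (d : ChimeraVertex r → ℝ) (Sopt : ChimeraVertex r → ℝ)
    (hmin : ∀ S : ChimeraVertex r → ℝ, IsPM S →
      IsingH c0 c1 c01 d Sopt ≤ IsingH c0 c1 c01 d S)
    (σ : ChimeraVertex r → ChimeraVertex r) (ε : ChimeraVertex r → ℝ)
    (hε : ∀ u, ε u = 1 ∨ ε u = -1) :
    IsingH c0 c1 c01 d Sopt ≤
      (∑ i, ∑ j, ∑ k, if σ (lowRow i, j, k, 0) = σ (highRow i, j, k, 0) then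
          c0 i j k * (ε (lowRow i, j, k, 0) * ε (highRow i, j, k, 0)) else 0)
      + (∑ i, ∑ j, ∑ k, if σ (i, lowRow j, k, 1) = σ (i, highRow j, k, 1) then
          c1 i j k * (ε (i, lowRow j, k, 1) * ε (i, highRow j, k, 1)) else 0)
      + (∑ i, ∑ j, ∑ k0, ∑ k1, if σ (i, j, k0, 0) = σ (i, j, k1, 1) then
          c01 i j k0 k1 * (ε (i, j, k0, 0) * ε (i, j, k1, 1)) else 0) := by
  have hn : 0 < ((Fintype.card (ChimeraVertex r → Bool) : ℝ)) := by
    exact_mod_cast (Fintype.card_pos : 0 < Fintype.card (ChimeraVertex r → Bool))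
  set n : ℝ := (Fintype.card (ChimeraVertex r → Bool) : ℝ) with hn_def
  have hT : ∀ g : ChimeraVertex r → Bool, IsPM (fun u => ε u * chi (g (σ u))) := by
    intro g u
    rcases hε u with h | h <;> rcases chi_pm (g (σ u)) with h2 | h2 <;>
      simp only [h, h2] <;> norm_num
  have hsum : n * IsingH c0 c1 c01 d Sopt
      ≤ ∑ g : ChimeraVertex r → Bool, IsingH c0 c1 c01 d (fun u => ε u * chi (g (σ u))) := by
    have := Finset.card_nsmul_le_sum Finset.univ
      (fun g : ChimeraVertex r → Bool => IsingH c0 c1 c01 d (fun u => ε u * chi (g (σ u))))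
      (IsingH c0 c1 c01 d Sopt)
      (fun g _ => hmin _ (hT g))
    rwa [Finset.card_univ, nsmul_eq_mul] at this
  have heq : ∑ g : ChimeraVertex r → Bool, IsingH c0 c1 c01 d (fun u => ε u * chi (g (σ u)))
      = n * ((∑ i, ∑ j, ∑ k, if σ (lowRow i, j, k, 0) = σ (highRow i, j, k, 0) then
          c0 i j k * (ε (lowRow i, j, k, 0) * ε (highRow i, j, k, 0)) else 0)
      + (∑ i, ∑ j, ∑ k, if σ (i, lowRow j, k, 1) = σ (i, highRow j, k, 1) then
          c1 i j k * (ε (i, lowRow j, k, 1) * ε (i, highRow j, k, 1)) else 0)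
      + (∑ i, ∑ j, ∑ k0, ∑ k1, if σ (i, j, k0, 0) = σ (i, j, k1, 1) then
          c01 i j k0 k1 * (ε (i, j, k0, 0) * ε (i, j, k1, 1)) else 0)) := by
    have hA : ∑ g : ChimeraVertex r → Bool, ∑ i, ∑ j, ∑ k,
        c0 i j k * ((ε (lowRow i, j, k, 0) * chi (g (σ (lowRow i, j, k, 0))))
          * (ε (highRow i, j, k, 0) * chi (g (σ (highRow i, j, k, 0)))))
        = n * (∑ i, ∑ j, ∑ k, if σ (lowRow i, j, k, 0) = σ (highRow i, j, k, 0) then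
          c0 i j k * (ε (lowRow i, j, k, 0) * ε (highRow i, j, k, 0)) else 0) := by
      rw [swap3]
      simp only [pair_term]
      simp only [← Finset.mul_sum]
      rfl
    have hB : ∑ g : ChimeraVertex r → Bool, ∑ i, ∑ j, ∑ k,
        c1 i j k * ((ε (i, lowRow j, k, 1) * chi (g (σ (i, lowRow j, k, 1))))
          * (ε (i, highRow j, k, 1) * chi (g (σ (i, highRow j, k, 1)))))
        = n * (∑ i, ∑ j, ∑ k, if σ (i, lowRow j, k, 1) = σ (i, highRow j, k, 1) then
          c1 i j k * (ε (i, lowRow j, k, 1) * ε (i, highRow j, k, 1)) else 0) := by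
      rw [swap3]
      simp only [pair_term]
      simp only [← Finset.mul_sum]
      rfl
    have hC : ∑ g : ChimeraVertex r → Bool, ∑ i, ∑ j, ∑ k0, ∑ k1,
        c01 i j k0 k1 * ((ε (i, j, k0, 0) * chi (g (σ (i, j, k0, 0))))
          * (ε (i, j, k1, 1) * chi (g (σ (i, j, k1, 1)))))
        = n * (∑ i, ∑ j, ∑ k0, ∑ k1, if σ (i, j, k0, 0) = σ (i, j, k1, 1) then
          c01 i j k0 k1 * (ε (i, j, k0, 0) * ε (i, j, k1, 1)) else 0) := by
      rw [swap4]
      simp only [pair_term]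
      simp only [← Finset.mul_sum]
      rfl
    have hD : ∑ g : ChimeraVertex r → Bool, ∑ v, d v * (ε v * chi (g (σ v))) = 0 := by
      rw [Finset.sum_comm]
      simp only [field_term, Finset.sum_const_zero]
    simp only [IsingH]
    rw [Finset.sum_add_distrib, Finset.sum_add_distrib, Finset.sum_add_distrib,
      hA, hB, hC, hD]
    ring
  rw [heq] at hsum
  exact le_of_mul_le_mul_left hsum hn

/-! ### Concrete schemes -/

noncomputable def sgn' (x : ℝ) : ℝ := if 0 ≤ x then -1 else 1

lemma sgn'_pm (x : ℝ) : sgn' x = 1 ∨ sgn' x = -1 := by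
  unfold sgn'; split <;> simp

lemma mul_sgn' (x : ℝ) : x * sgn' x = -|x| := by
  unfold sgn'
  split_ifs with h
  · rw [abs_of_nonneg h]; ring
  · rw [abs_of_neg (not_le.mp h)]; ring

lemma mul_pm_le_abs (c x y : ℝ) (hx : x = 1 ∨ x = -1) (hy : y = 1 ∨ y = -1) :
    c * (x * y) ≤ |c| := by
  rcases hx with h | h <;> rcases hy with h' | h' <;> rw [h, h'] <;> norm_num <;>
    first
      | exact le_abs_self c
      | exact neg_le_abs c

def sig0 {r : ℕ} (t : ℕ) : ChimeraVertex r → ChimeraVertex r := fun v =>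
  if v.2.2.2.val = 0 then
    ((if v.1.val % 2 = t % 2 then v.1 else ⟨v.1.val - 1, by have := v.1.isLt; omega⟩),
      v.2.1, v.2.2.1, v.2.2.2)
  else v

noncomputable def eps0 {r : ℕ} (t : ℕ) (c0 : Fin (r-1) → Fin r → Fin 4 → ℝ) :
    ChimeraVertex r → ℝ := fun v =>
  if h : v.2.2.2.val = 0 ∧ ¬ (v.1.val % 2 = t % 2) ∧ 1 ≤ v.1.val then
    sgn' (c0 ⟨v.1.val - 1, by have := v.1.isLt; omega⟩ v.2.1 v.2.2.1) else 1

lemma eps0_pm {r : ℕ} (t : ℕ) (c0 : Fin (r-1) → Fin r → Fin 4 → ℝ) (u : ChimeraVertex r) :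
    eps0 t c0 u = 1 ∨ eps0 t c0 u = -1 := by
  unfold eps0
  split
  · exact sgn'_pm _
  · left; rfl

def sig1 {r : ℕ} (t : ℕ) : ChimeraVertex r → ChimeraVertex r := fun v =>
  if v.2.2.2.val = 1 then
    (v.1,
      (if v.2.1.val % 2 = t % 2 then v.2.1 else ⟨v.2.1.val - 1, by have := v.2.1.isLt; omega⟩),
      v.2.2.1, v.2.2.2)
  else v

noncomputable def eps1 {r : ℕ} (t : ℕ) (c1 : Fin r → Fin (r-1) → Fin 4 → ℝ) :
    ChimeraVertex r → ℝ := fun v =>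
  if h : v.2.2.2.val = 1 ∧ ¬ (v.2.1.val % 2 = t % 2) ∧ 1 ≤ v.2.1.val then
    sgn' (c1 v.1 ⟨v.2.1.val - 1, by have := v.2.1.isLt; omega⟩ v.2.2.1) else 1

lemma eps1_pm {r : ℕ} (t : ℕ) (c1 : Fin r → Fin (r-1) → Fin 4 → ℝ) (u : ChimeraVertex r) :
    eps1 t c1 u = 1 ∨ eps1 t c1 u = -1 := by
  unfold eps1
  split
  · exact sgn'_pm _
  · left; rfl

def sigX {r : ℕ} (c : Fin 4) : ChimeraVertex r → ChimeraVertex r := fun v =>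
  if v.2.2.2.val = 1 then (v.1, v.2.1, v.2.2.1 - c, (0 : Fin 2)) else v

noncomputable def epsX {r : ℕ} (c : Fin 4) (c01 : Fin r → Fin r → Fin 4 → Fin 4 → ℝ) :
    ChimeraVertex r → ℝ := fun v =>
  if v.2.2.2.val = 1 then sgn' (c01 v.1 v.2.1 (v.2.2.1 - c) v.2.2.1) else 1

lemma epsX_pm {r : ℕ} (c : Fin 4) (c01 : Fin r → Fin r → Fin 4 → Fin 4 → ℝ)
    (u : ChimeraVertex r) : epsX c c01 u = 1 ∨ epsX c c01 u = -1 := by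
  unfold epsX
  split
  · exact sgn'_pm _
  · left; rfl

/-- Numeric part. -/
lemma num1 : (3 * (Real.log (1 + Real.sqrt 2) / Real.pi) + 4) /
        (Real.log (1 + Real.sqrt 2) / Real.pi) < 17.26 := by
  have hs : (1.414213 : ℝ) < Real.sqrt 2 := by
    nlinarith [Real.sq_sqrt (by norm_num : (0:ℝ) ≤ 2), Real.sqrt_nonneg 2]
  have hexp : Real.exp 0.8813 ≤ 2.414037 := by
    have h := Real.exp_bound' (x := 0.8813) (by norm_num) (by norm_num) (n := 8) (by norm_num)
    calc Real.exp 0.8813 ≤ _ := h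
    _ ≤ 2.414037 := by
      norm_num [Finset.sum_range_succ, Nat.factorial]
  have hL : (0.8813 : ℝ) < Real.log (1 + Real.sqrt 2) := by
    rw [show (0.8813:ℝ) = Real.log (Real.exp 0.8813) by rw [Real.log_exp]]
    apply Real.log_lt_log (Real.exp_pos _)
    linarith
  have hπu : Real.pi < 3.141593 := Real.pi_lt_d6
  have hπl : (3.14 : ℝ) < Real.pi := by linarith [Real.pi_gt_d6]
  have hC : (0:ℝ) < Real.log (1 + Real.sqrt 2) / Real.pi := by positivity
  rw [div_lt_iff₀ hC]
  have h4 : (4:ℝ) < 14.26 * (Real.log (1 + Real.sqrt 2) / Real.pi) := by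
    rw [mul_div_assoc', lt_div_iff₀ (by linarith)]
    nlinarith
  linarith

theorem stmt10 (r : ℕ) (hr : 1 ≤ r)
    (c0 : Fin (r - 1) → Fin r → Fin 4 → ℝ)
    (c1 : Fin r → Fin (r - 1) → Fin 4 → ℝ)
    (c01 : Fin r → Fin r → Fin 4 → Fin 4 → ℝ)
    (d : ChimeraVertex r → ℝ)
    (Sopt : ChimeraVertex r → ℝ) (hSopt : IsPM Sopt)
    (hmin : ∀ S : ChimeraVertex r → ℝ, IsPM S →
      IsingH c0 c1 c01 d Sopt ≤ IsingH c0 c1 c01 d S) :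
    (3 * (Real.log (1 + Real.sqrt 2) / Real.pi) + 4) /
        (Real.log (1 + Real.sqrt 2) / Real.pi) < 17.26
    ∧ IsingH c0 c1 c01 d Sopt ≤
        -(1 / 17.26) *
          ((∑ i, ∑ j, ∑ k, |c0 i j k|) + (∑ i, ∑ j, ∑ k, |c1 i j k|)
            + (∑ i, ∑ j, ∑ k0, ∑ k1, |c01 i j k0 k1|) + (∑ v, |d v|)) := by
  refine ⟨num1, ?_⟩
  -- scheme for E0 edges
  have h0 : ∀ t : ℕ, t < 2 → IsingH c0 c1 c01 d Sopt ≤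
      ∑ i, ∑ j, ∑ k, (if i.val % 2 = t then -|c0 i j k| else 0) := by
    intro t ht
    have hk := key c0 c1 c01 d Sopt hmin (sig0 t) (eps0 t c0) (eps0_pm t c0)
    refine hk.trans (le_of_eq ?_)
    have eA : (∑ i, ∑ j, ∑ k, if sig0 t (lowRow i, j, k, 0) = sig0 t (highRow i, j, k, 0) then
          c0 i j k * (eps0 t c0 (lowRow i, j, k, 0) * eps0 t c0 (highRow i, j, k, 0)) else 0)
        = ∑ i, ∑ j, ∑ k, (if i.val % 2 = t then -|c0 i j k| else 0) := by
      refine Finset.sum_congr rfl fun i _ => Finset.sum_congr rfl fun j _ =>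
        Finset.sum_congr rfl fun k _ => ?_
      have hlt := i.isLt
      by_cases hpar : i.val % 2 = t
      · rw [if_pos hpar]
        have h1 : i.val % 2 = t % 2 := by omega
        have h2 : ¬ ((i.val + 1) % 2 = t % 2) := by omega
        have hcond : sig0 t (lowRow (r := r) i, j, k, 0) = sig0 t (highRow i, j, k, 0) := by
          simp [sig0, lowRow, highRow, h1, h2, Fin.ext_iff]
        rw [if_pos hcond]
        have he1 : eps0 t c0 (lowRow (r := r) i, j, k, 0) = 1 := by
          simp [eps0, lowRow, h1]
        have he2 : eps0 t c0 (highRow (r := r) i, j, k, 0) = sgn' (c0 i j k) := by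
          simp [eps0, highRow, h2]
        rw [he1, he2, one_mul, mul_sgn' (c0 i j k)]
      · rw [if_neg hpar, if_neg]
        intro hcond
        have h1 : ¬ (i.val % 2 = t % 2) := by omega
        have h2 : (i.val + 1) % 2 = t % 2 := by omega
        simp [sig0, lowRow, highRow, h1, h2, Fin.ext_iff] at hcond
    have eB : (∑ i, ∑ j, ∑ k, if sig0 t (i, lowRow j, k, 1) = sig0 t (i, highRow j, k, 1) then
          c1 i j k * (eps0 t c0 (i, lowRow j, k, 1) * eps0 t c0 (i, highRow j, k, 1)) else 0)
        = 0 := by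
      refine Finset.sum_eq_zero fun i _ => Finset.sum_eq_zero fun j _ =>
        Finset.sum_eq_zero fun k _ => ?_
      rw [if_neg]
      intro hcond
      simp [sig0, lowRow, highRow, Fin.ext_iff] at hcond
    have eC : (∑ i, ∑ j, ∑ k0, ∑ k1, if sig0 t (i, j, k0, 0) = sig0 t (i, j, k1, 1) then
          c01 i j k0 k1 * (eps0 t c0 (i, j, k0, 0) * eps0 t c0 (i, j, k1, 1)) else 0)
        = 0 := by
      refine Finset.sum_eq_zero fun i _ => Finset.sum_eq_zero fun j _ =>
        Finset.sum_eq_zero fun k0 _ => Finset.sum_eq_zero fun k1 _ => ?_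
      rw [if_neg]
      intro hcond
      simp [sig0, Prod.ext_iff, Fin.ext_iff] at hcond
    rw [eA, eB, eC, add_zero, add_zero]
  -- scheme for E1 edges
  have h1 : ∀ t : ℕ, t < 2 → IsingH c0 c1 c01 d Sopt ≤
      ∑ i, ∑ j, ∑ k, (if j.val % 2 = t then -|c1 i j k| else 0) := by
    intro t ht
    have hk := key c0 c1 c01 d Sopt hmin (sig1 t) (eps1 t c1) (eps1_pm t c1)
    refine hk.trans (le_of_eq ?_)
    have eA : (∑ i, ∑ j, ∑ k, if sig1 t (lowRow i, j, k, 0) = sig1 t (highRow i, j, k, 0) then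
          c0 i j k * (eps1 t c1 (lowRow i, j, k, 0) * eps1 t c1 (highRow i, j, k, 0)) else 0)
        = 0 := by
      refine Finset.sum_eq_zero fun i _ => Finset.sum_eq_zero fun j _ =>
        Finset.sum_eq_zero fun k _ => ?_
      rw [if_neg]
      intro hcond
      simp [sig1, lowRow, highRow, Fin.ext_iff] at hcond
    have eB : (∑ i, ∑ j, ∑ k, if sig1 t (i, lowRow j, k, 1) = sig1 t (i, highRow j, k, 1) then
          c1 i j k * (eps1 t c1 (i, lowRow j, k, 1) * eps1 t c1 (i, highRow j, k, 1)) else 0)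
        = ∑ i, ∑ j, ∑ k, (if j.val % 2 = t then -|c1 i j k| else 0) := by
      refine Finset.sum_congr rfl fun i _ => Finset.sum_congr rfl fun j _ =>
        Finset.sum_congr rfl fun k _ => ?_
      have hlt := j.isLt
      by_cases hpar : j.val % 2 = t
      · rw [if_pos hpar]
        have hp1 : j.val % 2 = t % 2 := by omega
        have hp2 : ¬ ((j.val + 1) % 2 = t % 2) := by omega
        have hcond : sig1 t (i, lowRow (r := r) j, k, 1) = sig1 t (i, highRow j, k, 1) := by
          simp [sig1, lowRow, highRow, hp1, hp2, Fin.ext_iff]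
        rw [if_pos hcond]
        have he1 : eps1 t c1 (i, lowRow (r := r) j, k, 1) = 1 := by
          simp [eps1, lowRow, hp1]
        have he2 : eps1 t c1 (i, highRow (r := r) j, k, 1) = sgn' (c1 i j k) := by
          simp [eps1, highRow, hp2]
        rw [he1, he2, one_mul, mul_sgn' (c1 i j k)]
      · rw [if_neg hpar, if_neg]
        intro hcond
        have hp1 : ¬ (j.val % 2 = t % 2) := by omega
        have hp2 : (j.val + 1) % 2 = t % 2 := by omega
        simp [sig1, lowRow, highRow, hp1, hp2, Fin.ext_iff] at hcond
    have eC : (∑ i, ∑ j, ∑ k0, ∑ k1, if sig1 t (i, j, k0, 0) = sig1 t (i, j, k1, 1) then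
          c01 i j k0 k1 * (eps1 t c1 (i, j, k0, 0) * eps1 t c1 (i, j, k1, 1)) else 0)
        = 0 := by
      refine Finset.sum_eq_zero fun i _ => Finset.sum_eq_zero fun j _ =>
        Finset.sum_eq_zero fun k0 _ => Finset.sum_eq_zero fun k1 _ => ?_
      rw [if_neg]
      intro hcond
      simp [sig1, Prod.ext_iff, Fin.ext_iff] at hcond
    rw [eA, eB, eC, zero_add, add_zero]
  -- scheme for E01 edges
  have hX : ∀ c : Fin 4, IsingH c0 c1 c01 d Sopt ≤
      ∑ i, ∑ j, ∑ k0, ∑ k1, (if k1 = k0 + c then -|c01 i j k0 k1| else 0) := by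
    intro c
    have hk := key c0 c1 c01 d Sopt hmin (sigX c) (epsX c c01) (epsX_pm c c01)
    refine hk.trans (le_of_eq ?_)
    have eA : (∑ i, ∑ j, ∑ k, if sigX c (lowRow i, j, k, 0) = sigX c (highRow i, j, k, 0) then
          c0 i j k * (epsX c c01 (lowRow i, j, k, 0) * epsX c c01 (highRow i, j, k, 0)) else 0)
        = 0 := by
      refine Finset.sum_eq_zero fun i _ => Finset.sum_eq_zero fun j _ =>
        Finset.sum_eq_zero fun k _ => ?_
      rw [if_neg]
      intro hcond
      simp [sigX, lowRow, highRow, Fin.ext_iff] at hcond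
    have eB : (∑ i, ∑ j, ∑ k, if sigX c (i, lowRow j, k, 1) = sigX c (i, highRow j, k, 1) then
          c1 i j k * (epsX c c01 (i, lowRow j, k, 1) * epsX c c01 (i, highRow j, k, 1)) else 0)
        = 0 := by
      refine Finset.sum_eq_zero fun i _ => Finset.sum_eq_zero fun j _ =>
        Finset.sum_eq_zero fun k _ => ?_
      rw [if_neg]
      intro hcond
      simp [sigX, lowRow, highRow, Prod.ext_iff, Fin.ext_iff] at hcond
    have eC : (∑ i, ∑ j, ∑ k0, ∑ k1, if sigX c (i, j, k0, 0) = sigX c (i, j, k1, 1) then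
          c01 i j k0 k1 * (epsX c c01 (i, j, k0, 0) * epsX c c01 (i, j, k1, 1)) else 0)
        = ∑ i, ∑ j, ∑ k0, ∑ k1, (if k1 = k0 + c then -|c01 i j k0 k1| else 0) := by
      refine Finset.sum_congr rfl fun i _ => Finset.sum_congr rfl fun j _ =>
        Finset.sum_congr rfl fun k0 _ => Finset.sum_congr rfl fun k1 _ => ?_
      by_cases h : k1 = k0 + c
      · rw [if_pos h]
        have hsub : k1 - c = k0 := by rw [h]; abel
        have hcond : sigX c ((i, j, k0, 0) : ChimeraVertex r) = sigX c (i, j, k1, 1) := by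
          simp [sigX, hsub]
        rw [if_pos hcond]
        have he1 : epsX c c01 ((i, j, k0, 0) : ChimeraVertex r) = 1 := by
          simp [epsX]
        have he2 : epsX c c01 ((i, j, k1, 1) : ChimeraVertex r) = sgn' (c01 i j k0 k1) := by
          simp [epsX, hsub]
        rw [he1, he2, one_mul, mul_sgn' (c01 i j k0 k1)]
      · rw [if_neg h, if_neg]
        intro hcond
        simp [sigX, Prod.ext_iff] at hcond
        exact h (by rw [hcond]; abel)
    rw [eA, eB, eC, zero_add, zero_add]
  -- field scheme
  have hfield : IsingH c0 c1 c01 d Sopt ≤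
      (∑ i, ∑ j, ∑ k, |c0 i j k|) + (∑ i, ∑ j, ∑ k, |c1 i j k|)
        + (∑ i, ∑ j, ∑ k0, ∑ k1, |c01 i j k0 k1|) - (∑ v, |d v|) := by
    have hS : IsPM (fun v : ChimeraVertex r => sgn' (d v)) := fun v => sgn'_pm _
    refine (hmin _ hS).trans ?_
    unfold IsingH
    have b1 : (∑ i, ∑ j, ∑ k, c0 i j k * (sgn' (d (lowRow i, j, k, 0)) * sgn' (d (highRow i, j, k, 0))))
        ≤ ∑ i, ∑ j, ∑ k, |c0 i j k| := by
      refine Finset.sum_le_sum fun i _ => Finset.sum_le_sum fun j _ =>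
        Finset.sum_le_sum fun k _ => mul_pm_le_abs _ _ _ (sgn'_pm _) (sgn'_pm _)
    have b2 : (∑ i, ∑ j, ∑ k, c1 i j k * (sgn' (d (i, lowRow j, k, 1)) * sgn' (d (i, highRow j, k, 1))))
        ≤ ∑ i, ∑ j, ∑ k, |c1 i j k| := by
      refine Finset.sum_le_sum fun i _ => Finset.sum_le_sum fun j _ =>
        Finset.sum_le_sum fun k _ => mul_pm_le_abs _ _ _ (sgn'_pm _) (sgn'_pm _)
    have b3 : (∑ i, ∑ j, ∑ k0, ∑ k1, c01 i j k0 k1 * (sgn' (d (i, j, k0, 0)) * sgn' (d (i, j, k1, 1))))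
        ≤ ∑ i, ∑ j, ∑ k0, ∑ k1, |c01 i j k0 k1| := by
      refine Finset.sum_le_sum fun i _ => Finset.sum_le_sum fun j _ =>
        Finset.sum_le_sum fun k0 _ => Finset.sum_le_sum fun k1 _ =>
          mul_pm_le_abs _ _ _ (sgn'_pm _) (sgn'_pm _)
    have b4 : (∑ v, d v * sgn' (d v)) = -(∑ v, |d v|) := by
      rw [← Finset.sum_neg_distrib]
      exact Finset.sum_congr rfl fun v _ => mul_sgn' (d v)
    rw [b4]
    linarith [b1, b2, b3]
  -- combine the per-scheme bounds
  have h0e := h0 0 (by norm_num)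
  have h0o := h0 1 (by norm_num)
  have h1e := h1 0 (by norm_num)
  have h1o := h1 1 (by norm_num)
  have hX0 := hX 0
  have hX1 := hX 1
  have hX2 := hX 2
  have hX3 := hX 3
  have e0 : (∑ i, ∑ j, ∑ k, (if i.val % 2 = 0 then -|c0 i j k| else 0))
      + (∑ i, ∑ j, ∑ k, (if i.val % 2 = 1 then -|c0 i j k| else 0))
      = -(∑ i, ∑ j, ∑ k, |c0 i j k|) := by
    rw [sum3_add, ← sum3_neg]
    refine Finset.sum_congr rfl fun i _ => Finset.sum_congr rfl fun j _ =>
      Finset.sum_congr rfl fun k _ => ?_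
    rcases Nat.mod_two_eq_zero_or_one i.val with h | h <;> simp [h]
  have e1 : (∑ i, ∑ j, ∑ k, (if j.val % 2 = 0 then -|c1 i j k| else 0))
      + (∑ i, ∑ j, ∑ k, (if j.val % 2 = 1 then -|c1 i j k| else 0))
      = -(∑ i, ∑ j, ∑ k, |c1 i j k|) := by
    rw [sum3_add, ← sum3_neg]
    refine Finset.sum_congr rfl fun i _ => Finset.sum_congr rfl fun j _ =>
      Finset.sum_congr rfl fun k _ => ?_
    rcases Nat.mod_two_eq_zero_or_one j.val with h | h <;> simp [h]
  have eX : (∑ i, ∑ j, ∑ k0, ∑ k1, (if k1 = k0 + (0 : Fin 4) then -|c01 i j k0 k1| else 0))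
      + (∑ i, ∑ j, ∑ k0, ∑ k1, (if k1 = k0 + (1 : Fin 4) then -|c01 i j k0 k1| else 0))
      + (∑ i, ∑ j, ∑ k0, ∑ k1, (if k1 = k0 + (2 : Fin 4) then -|c01 i j k0 k1| else 0))
      + (∑ i, ∑ j, ∑ k0, ∑ k1, (if k1 = k0 + (3 : Fin 4) then -|c01 i j k0 k1| else 0))
      = -(∑ i, ∑ j, ∑ k0, ∑ k1, |c01 i j k0 k1|) := by
    rw [sum4_add, sum4_add, sum4_add, ← sum4_neg]
    refine Finset.sum_congr rfl fun i _ => Finset.sum_congr rfl fun j _ =>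
      Finset.sum_congr rfl fun k0 _ => Finset.sum_congr rfl fun k1 _ => ?_
    fin_cases k0 <;> fin_cases k1 <;>
      simp [Fin.ext_iff, Fin.add_def, show ((3:Fin 4)).val = 3 from rfl,
        show ((2:Fin 4)).val = 2 from rfl, show ((1:Fin 4)).val = 1 from rfl,
        show ((0:Fin 4)).val = 0 from rfl]
  have hd0 : (0:ℝ) ≤ ∑ v, |d v| := Finset.sum_nonneg fun v _ => abs_nonneg _
  have hc0nn : (0:ℝ) ≤ ∑ i, ∑ j, ∑ k, |c0 i j k| :=
    Finset.sum_nonneg fun i _ => Finset.sum_nonneg fun j _ =>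
      Finset.sum_nonneg fun k _ => abs_nonneg _
  have hc1nn : (0:ℝ) ≤ ∑ i, ∑ j, ∑ k, |c1 i j k| :=
    Finset.sum_nonneg fun i _ => Finset.sum_nonneg fun j _ =>
      Finset.sum_nonneg fun k _ => abs_nonneg _
  have hc01nn : (0:ℝ) ≤ ∑ i, ∑ j, ∑ k0, ∑ k1, |c01 i j k0 k1| :=
    Finset.sum_nonneg fun i _ => Finset.sum_nonneg fun j _ =>
      Finset.sum_nonneg fun k0 _ => Finset.sum_nonneg fun k1 _ => abs_nonneg _
  linarith [h0e, h0o, h1e, h1o, hX0, hX1, hX2, hX3, hfield, e0, e1, eX,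
    hd0, hc0nn, hc1nn, hc01nn]
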